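/- Let n ≥ 2 and let 1 ≤ k ≤ n−2. The number of spanning trees T of the complete graph K_n such that every neighbor of the vertex n−k in T is smaller than n−k (i.e., the number of uprooted spanning trees of K_n with root n−k) equals (n−1−k) · n^{n−2−k} · (n−1)^{k−1}. -/

import Mathlib

open Finset

namespace Uprooted

set_option linter.unusedSectionVars false

variable {V : Type*} [DecidableEq V]

/-- `f` is a rooted forest on support `W` with root set `A`. -/
def IsRF (W A : Finset V) (f : V → V) : Prop :=
  (∀ v, v ∉ W → f v = v) ∧ (∀ a ∈ A, f a = a) ∧ (∀ v ∈ W, f v ∈ W) ∧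
    ∀ v ∈ W, ∃ k, f^[k] v ∈ A

/-- `g` maps `B` into `A` and is the identity off `B`. -/
def IsMp (B A : Finset V) (g : V → V) : Prop :=
  (∀ v ∈ B, g v ∈ A) ∧ ∀ v ∉ B, g v = v

lemma iterate_mem {W : Finset V} {f : V → V} (hf : ∀ v ∈ W, f v ∈ W) {v : V}
    (hv : v ∈ W) (k : ℕ) : f^[k] v ∈ W := by
  induction k with
  | zero => simpa
  | succ k ih => rw [Function.iterate_succ_apply']; exact hf _ ih

lemma reach_fwd {W A : Finset V} {f f' : V → V} (hWf : ∀ v ∈ W, f v ∈ W)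
    (hf' : ∀ x, x ∈ W → x ∉ A → f x ∉ A → f' x = f x)
    {v : V} (hvW : v ∈ W) (hvA : v ∉ A) (hreach : ∃ k, f^[k] v ∈ A) :
    ∃ k, f'^[k] v ∈ W ∧ f'^[k] v ∉ A ∧ f (f'^[k] v) ∈ A := by
  classical
  let k₀ := Nat.find hreach
  have hk₀ : f^[k₀] v ∈ A := Nat.find_spec hreach
  have hmin : ∀ i, i < k₀ → f^[i] v ∉ A := fun i hi => Nat.find_min hreach hi
  have hk₀pos : 1 ≤ k₀ := by
    rcases Nat.eq_zero_or_pos k₀ with h | h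
    · exact absurd (by simpa [h] using hk₀) hvA
    · exact h
  have key : ∀ i, i ≤ k₀ - 1 → f'^[i] v = f^[i] v := by
    intro i hi
    induction i with
    | zero => rfl
    | succ i ih =>
      rw [Function.iterate_succ_apply', Function.iterate_succ_apply',
        ih (le_trans (Nat.le_succ i) hi)]
      exact hf' _ (iterate_mem hWf hvW i)
        (hmin i (by omega)) (by
          have := hmin (i + 1) (by omega)
          rwa [Function.iterate_succ_apply'] at this)
  refine ⟨k₀ - 1, ?_⟩
  rw [key _ le_rfl]
  refine ⟨iterate_mem hWf hvW _, hmin _ (by omega), ?_⟩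
  have h2 : f^[k₀ - 1 + 1] v ∈ A := by rw [show k₀ - 1 + 1 = k₀ by omega]; exact hk₀
  rwa [Function.iterate_succ_apply'] at h2

lemma reach_bwd {W' B : Finset V} {f f' : V → V}
    (hW'f' : ∀ v ∈ W', f' v ∈ W')
    (heq : ∀ x ∈ W', x ∉ B → f x = f' x)
    {v : V} (hvW : v ∈ W') (hreach : ∃ k, f'^[k] v ∈ B) :
    ∃ k, f^[k] v ∈ B := by
  classical
  let k₀ := Nat.find hreach
  have hk₀ : f'^[k₀] v ∈ B := Nat.find_spec hreach
  have hmin : ∀ i, i < k₀ → f'^[i] v ∉ B := fun i hi => Nat.find_min hreach hi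
  have key : ∀ i, i ≤ k₀ → f^[i] v = f'^[i] v := by
    intro i hi
    induction i with
    | zero => rfl
    | succ i ih =>
      rw [Function.iterate_succ_apply', Function.iterate_succ_apply',
        ih (le_trans (Nat.le_succ i) hi)]
      exact heq _ (iterate_mem hW'f' hvW i) (hmin i (by omega))
  exact ⟨k₀, by rw [key _ le_rfl]; exact hk₀⟩

namespace Decomp

/-- Vertices of `W \ A` mapped directly into `A` by `f`. -/
def Bset (W A : Finset V) (f : V → V) : Finset V := (W \ A).filter (fun v => f v ∈ A)

def gOf (W A : Finset V) (f : V → V) : V → V := fun v => if v ∈ Bset W A f then f v else v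

def fOf (W A : Finset V) (f : V → V) : V → V :=
  fun v => if v ∈ (W \ A) \ Bset W A f then f v else v

def combine (W A B : Finset V) (g f' : V → V) : V → V :=
  fun v => if v ∈ B then g v else if v ∈ (W \ A) \ B then f' v else v

variable {W A D B : Finset V} {f g f' : V → V}

lemma mem_Bset {v : V} : v ∈ Bset W A f ↔ v ∈ W ∧ v ∉ A ∧ f v ∈ A := by
  simp [Bset, mem_filter, mem_sdiff, and_assoc]

lemma toFun_prop (hA : A ⊆ W) (hD : D ⊆ W \ A)
    (hf : IsRF W A f) (hcond : ∀ v ∈ W \ A, f v ∈ A → v ∈ D) :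
    Bset W A f ⊆ D ∧ IsMp (Bset W A f) A (gOf W A f) ∧
      IsRF (W \ A) (Bset W A f) (fOf W A f) := by
  obtain ⟨hid, hroot, hmaps, hreach⟩ := hf
  refine ⟨?_, ⟨?_, ?_⟩, ?_, ?_, ?_, ?_⟩
  · intro v hv
    rw [mem_Bset] at hv
    exact hcond v (by simp [mem_sdiff, hv.1, hv.2.1]) hv.2.2
  · intro v hv
    rw [gOf, if_pos hv]
    exact (mem_Bset.mp hv).2.2
  · intro v hv
    rw [gOf, if_neg hv]
  · intro v hv
    rw [fOf, if_neg (fun h => hv (mem_sdiff.mp h).1)]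
  · intro a ha
    rw [fOf, if_neg (fun h => (mem_sdiff.mp h).2 ha)]
  · intro v hv
    rw [fOf]
    split
    · rename_i h
      rw [mem_sdiff] at hv ⊢
      refine ⟨hmaps _ hv.1, fun hfA => ?_⟩
      exact (mem_sdiff.mp h).2 (mem_Bset.mpr ⟨hv.1, hv.2, hfA⟩)
    · exact hv
  · intro v hv
    rw [mem_sdiff] at hv
    have := reach_fwd (f' := fOf W A f) hmaps ?_ hv.1 hv.2 (hreach v hv.1)
    · obtain ⟨k, h1, h2, h3⟩ := this
      exact ⟨k, mem_Bset.mpr ⟨h1, h2, h3⟩⟩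
    · intro x hxW hxA hfxA
      rw [fOf, if_pos]
      rw [mem_sdiff, mem_sdiff, mem_Bset]
      exact ⟨⟨hxW, hxA⟩, fun h => hfxA h.2.2⟩

lemma invFun_prop (hA : A ⊆ W) (hD : D ⊆ W \ A)
    (hB : B ⊆ D) (hg : IsMp B A g) (hf' : IsRF (W \ A) B f') :
    IsRF W A (combine W A B g f') ∧
      ∀ v ∈ W \ A, combine W A B g f' v ∈ A → v ∈ D := by
  have hBWA : B ⊆ W \ A := hB.trans hD
  obtain ⟨hid', hroot', hmaps', hreach'⟩ := hf'
  have hnotB_A : ∀ a ∈ A, a ∉ B := fun a ha hB' => (mem_sdiff.mp (hBWA hB')).2 ha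
  refine ⟨⟨?_, ?_, ?_, ?_⟩, ?_⟩
  · intro v hv
    rw [combine, if_neg (fun h => hv (mem_sdiff.mp (hBWA h)).1),
      if_neg (fun h => hv (mem_sdiff.mp (mem_sdiff.mp h).1).1)]
  · intro a ha
    rw [combine, if_neg (hnotB_A a ha), if_neg (fun h => (mem_sdiff.mp (mem_sdiff.mp h).1).2 ha)]
  · intro v hv
    rw [combine]
    split
    · rename_i h
      exact hA (hg.1 _ h)
    · split
      · rename_i h h2
        exact (mem_sdiff.mp (hmaps' _ (mem_sdiff.mp h2).1)).1
      · exact hv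
  · intro v hv
    by_cases hvA : v ∈ A
    · exact ⟨0, hvA⟩
    by_cases hvB : v ∈ B
    · refine ⟨1, ?_⟩
      simp only [Function.iterate_one, combine, if_pos hvB]
      exact hg.1 _ hvB
    · have hvWA : v ∈ W \ A := mem_sdiff.mpr ⟨hv, hvA⟩
      have heq : ∀ x ∈ W \ A, x ∉ B → combine W A B g f' x = f' x := by
        intro x hx hxB
        rw [combine, if_neg hxB, if_pos (mem_sdiff.mpr ⟨hx, hxB⟩)]
      obtain ⟨k, hk⟩ := reach_bwd hmaps' heq hvWA (hreach' v hvWA)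
      refine ⟨k + 1, ?_⟩
      rw [Function.iterate_succ_apply', combine, if_pos hk]
      exact hg.1 _ hk
  · intro v hv hvA
    rw [combine] at hvA
    by_cases hvB : v ∈ B
    · exact hB hvB
    · have hmem : v ∈ (W \ A) \ B := mem_sdiff.mpr ⟨hv, hvB⟩
      rw [if_neg hvB, if_pos hmem] at hvA
      exact absurd hvA (mem_sdiff.mp (hmaps' _ hv)).2

lemma combine_eq (hf : IsRF W A f) :
    combine W A (Bset W A f) (gOf W A f) (fOf W A f) = f := by
  funext v
  rw [combine]
  by_cases h1 : v ∈ Bset W A f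
  · rw [if_pos h1, gOf, if_pos h1]
  · rw [if_neg h1]
    by_cases h2 : v ∈ (W \ A) \ Bset W A f
    · rw [if_pos h2, fOf, if_pos h2]
    · rw [if_neg h2]
      by_cases h3 : v ∈ W
      · by_cases h4 : v ∈ A
        · exact (hf.2.1 v h4).symm
        · exact absurd (mem_sdiff.mpr ⟨mem_sdiff.mpr ⟨h3, h4⟩, h1⟩) h2
      · exact (hf.1 v h3).symm

lemma Bset_combine (hA : A ⊆ W) (hD : D ⊆ W \ A)
    (hB : B ⊆ D) (hg : IsMp B A g) (hf' : IsRF (W \ A) B f') :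
    Bset W A (combine W A B g f') = B := by
  have hBWA : B ⊆ W \ A := hB.trans hD
  ext v
  rw [mem_Bset]
  constructor
  · rintro ⟨hvW, hvA, hfA⟩
    by_contra hvB
    have hmem : v ∈ (W \ A) \ B := mem_sdiff.mpr ⟨mem_sdiff.mpr ⟨hvW, hvA⟩, hvB⟩
    rw [combine, if_neg hvB, if_pos hmem] at hfA
    exact (mem_sdiff.mp (hf'.2.2.1 _ (mem_sdiff.mpr ⟨hvW, hvA⟩))).2 hfA
  · intro hvB
    have hv := mem_sdiff.mp (hBWA hvB)
    refine ⟨hv.1, hv.2, ?_⟩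
    rw [combine, if_pos hvB]
    exact hg.1 _ hvB

lemma gOf_combine (hA : A ⊆ W) (hD : D ⊆ W \ A)
    (hB : B ⊆ D) (hg : IsMp B A g) (hf' : IsRF (W \ A) B f') :
    gOf W A (combine W A B g f') = g := by
  funext v
  rw [gOf, Bset_combine hA hD hB hg hf']
  by_cases hvB : v ∈ B
  · rw [if_pos hvB, combine, if_pos hvB]
  · rw [if_neg hvB, hg.2 v hvB]

lemma fOf_combine (hA : A ⊆ W) (hD : D ⊆ W \ A)
    (hB : B ⊆ D) (hg : IsMp B A g) (hf' : IsRF (W \ A) B f') :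
    fOf W A (combine W A B g f') = f' := by
  funext v
  rw [fOf, Bset_combine hA hD hB hg hf']
  by_cases h : v ∈ (W \ A) \ B
  · rw [if_pos h, combine, if_neg (mem_sdiff.mp h).2, if_pos h]
  · rw [if_neg h]
    by_cases hvB : v ∈ B
    · exact (hf'.2.1 v hvB).symm
    · refine (hf'.1 v ?_).symm
      intro hv
      exact h (mem_sdiff.mpr ⟨hv, hvB⟩)

end Decomp

open Decomp in
/-- Decomposition of rooted forests (with first-layer constrained to `D`). -/
noncomputable def decompEquiv (W A D : Finset V) (hA : A ⊆ W) (hD : D ⊆ W \ A) :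
    {f : V → V // IsRF W A f ∧ ∀ v ∈ W \ A, f v ∈ A → v ∈ D} ≃
    {p : Finset V × ((V → V) × (V → V)) //
       p.1 ⊆ D ∧ IsMp p.1 A p.2.1 ∧ IsRF (W \ A) p.1 p.2.2} where
  toFun x := ⟨⟨Bset W A x.1, gOf W A x.1, fOf W A x.1⟩, toFun_prop hA hD x.2.1 x.2.2⟩
  invFun p := ⟨combine W A p.1.1 p.1.2.1 p.1.2.2,
    invFun_prop hA hD p.2.1 p.2.2.1 p.2.2.2⟩
  left_inv x := Subtype.ext (combine_eq x.2.1)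
  right_inv p := Subtype.ext (by
    obtain ⟨⟨B, g, f'⟩, hB, hg, hf'⟩ := p
    refine Prod.ext (Bset_combine hA hD hB hg hf') (Prod.ext ?_ ?_)
    · exact gOf_combine hA hD hB hg hf'
    · exact fOf_combine hA hD hB hg hf')

end Uprooted
open Finset Uprooted Uprooted.Decomp
variable {V : Type*} [DecidableEq V]

/-- Maps supported on `B` into `A` are equivalent to functions `B → A`. -/
noncomputable def mpEquiv (B A : Finset V) : {g : V → V // IsMp B A g} ≃ (↥B → ↥A) where
  toFun g b := ⟨g.1 b, g.2.1 b b.2⟩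
  invFun h := ⟨fun v => if hv : v ∈ B then (h ⟨v, hv⟩ : V) else v,
    fun v hv => by simp only [dif_pos hv]; exact Finset.coe_mem _,
    fun v hv => by simp only [dif_neg hv]⟩
  left_inv g := Subtype.ext (funext fun v => by
    by_cases hv : v ∈ B
    · simp only [dif_pos hv]
    · simp only [dif_neg hv]; exact (g.2.2 v hv).symm)
  right_inv h := funext fun b => Subtype.ext (by simp only [dif_pos b.2])

lemma card_mp (B A : Finset V) : Nat.card {g : V → V // IsMp B A g} = A.card ^ B.card := by
  rw [Nat.card_congr (mpEquiv B A), Nat.card_eq_fintype_card, Fintype.card_fun,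
    Fintype.card_coe, Fintype.card_coe]

lemma nat_card_sigma {ι : Type*} [Fintype ι] (F : ι → Type*) [∀ i, Finite (F i)] :
    Nat.card ((i : ι) × F i) = ∑ i, Nat.card (F i) := by
  classical
  letI : ∀ i, Fintype (F i) := fun i => Fintype.ofFinite _
  simp [Nat.card_eq_fintype_card]

variable [Fintype V]

lemma card_decomp (W A D : Finset V) (hA : A ⊆ W) (hD : D ⊆ W \ A) :
    Nat.card {f : V → V // IsRF W A f ∧ ∀ v ∈ W \ A, f v ∈ A → v ∈ D} =
      ∑ B ∈ D.powerset, A.card ^ B.card * Nat.card {f' : V → V // IsRF (W \ A) B f'} := by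
  rw [Nat.card_congr (decompEquiv W A D hA hD),
    Nat.card_congr (Equiv.subtypeProdEquivSigmaSubtype
      (fun (B : Finset V) (q : (V → V) × (V → V)) =>
        B ⊆ D ∧ IsMp B A q.1 ∧ IsRF (W \ A) B q.2)),
    nat_card_sigma]
  rw [← Finset.sum_subset (Finset.subset_univ D.powerset)]
  · apply Finset.sum_congr rfl
    intro B hB
    rw [Finset.mem_powerset] at hB
    have e : {q : (V → V) × (V → V) // B ⊆ D ∧ IsMp B A q.1 ∧ IsRF (W \ A) B q.2} ≃
        {g : V → V // IsMp B A g} × {f' : V → V // IsRF (W \ A) B f'} :=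
      (Equiv.subtypeEquivRight (fun q => and_iff_right hB)).trans
        (Equiv.subtypeProdEquivProd)
    rw [Nat.card_congr e, Nat.card_prod, card_mp]
  · intro B _ hB
    rw [Finset.mem_powerset] at hB
    have : IsEmpty {q : (V → V) × (V → V) // B ⊆ D ∧ IsMp B A q.1 ∧ IsRF (W \ A) B q.2} :=
      ⟨fun q => hB q.2.1⟩
    exact Nat.card_of_isEmpty

lemma binom_sum (M c : ℕ) (hM : 1 ≤ M) :
    ∑ j ∈ Finset.range (M + 1), M.choose j * (c ^ j * (j * M ^ (M - j))) =
      c * M * (c + M) ^ (M - 1) := by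
  obtain ⟨M', rfl⟩ : ∃ M', M = M' + 1 := ⟨M - 1, by omega⟩
  rw [Finset.sum_range_succ']
  have h0 : (M' + 1).choose 0 * (c ^ 0 * (0 * (M' + 1) ^ (M' + 1 - 0))) = 0 := by simp
  rw [h0, add_zero]
  have hterm : ∀ i, (M' + 1).choose (i + 1) * (c ^ (i + 1) * ((i + 1) * (M' + 1) ^ (M' + 1 - (i + 1)))) =
      (c * (M' + 1)) * (c ^ i * (M' + 1) ^ (M' - i) * M'.choose i) := by
    intro i
    have h := Nat.add_one_mul_choose_eq M' i
    have hexp : M' + 1 - (i + 1) = M' - i := by omega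
    calc (M' + 1).choose (i + 1) * (c ^ (i + 1) * ((i + 1) * (M' + 1) ^ (M' + 1 - (i + 1))))
        = ((M' + 1).choose (i + 1) * (i + 1)) * (c ^ (i + 1) * (M' + 1) ^ (M' - i)) := by
          rw [hexp]; ring
      _ = ((M' + 1) * M'.choose i) * (c ^ (i + 1) * (M' + 1) ^ (M' - i)) := by
          rw [← h]
      _ = (c * (M' + 1)) * (c ^ i * (M' + 1) ^ (M' - i) * M'.choose i) := by
          rw [pow_succ]; ring
  rw [Finset.sum_congr rfl (fun i _ => hterm i), ← Finset.mul_sum]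
  have : (c + (M' + 1)) ^ M' = ∑ i ∈ Finset.range (M' + 1),
      c ^ i * (M' + 1) ^ (M' - i) * M'.choose i := add_pow c (M' + 1) M'
  rw [show M' + 1 - 1 = M' by omega, this]

theorem card_isRF : ∀ (W A : Finset V), A ⊆ W →
    W.card * Nat.card {f : V → V // IsRF W A f} =
      A.card * W.card ^ (W.card - A.card) := by
  suffices H : ∀ (n : ℕ) (W A : Finset V), W.card = n → A ⊆ W →
      W.card * Nat.card {f : V → V // IsRF W A f} =
        A.card * W.card ^ (W.card - A.card) by
    intro W A hA; exact H W.card W A rfl hA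
  intro n
  induction n using Nat.strong_induction_on with
  | _ n ih =>
    intro W A hn hA
    by_cases hA0 : A = ∅
    · subst hA0
      simp only [Finset.card_empty, zero_mul]
      rcases W.eq_empty_or_nonempty with rfl | ⟨v, hv⟩
      · simp
      · have : IsEmpty {f : V → V // IsRF W ∅ f} := ⟨fun f => by
          obtain ⟨k, hk⟩ := f.2.2.2.2 v hv
          exact absurd hk (Finset.notMem_empty _)⟩
        rw [Nat.card_of_isEmpty, mul_zero]
    have hc : 1 ≤ A.card := Finset.card_pos.mpr (Finset.nonempty_iff_ne_empty.mpr hA0)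
    set M := (W \ A).card with hM
    have hcle : A.card ≤ W.card := Finset.card_le_card hA
    have hMcard : M = W.card - A.card := by rw [hM, Finset.card_sdiff_of_subset hA]
    by_cases hM0 : M = 0
    · have hWA : A = W := subset_antisymm hA
        (sdiff_eq_empty_iff_subset.mp (Finset.card_eq_zero.mp hM0))
      subst hWA
      haveI : Unique {f : V → V // IsRF A A f} := {
        default := ⟨id, fun v _ => rfl, fun a _ => rfl, fun v hv => hv,
          fun v hv => ⟨0, hv⟩⟩
        uniq := fun f => Subtype.ext (funext fun v => by
          by_cases hv : v ∈ A
          · exact f.2.2.1 v hv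
          · exact f.2.1 v hv) }
      rw [Nat.card_unique]
      simp
    have hM1 : 1 ≤ M := by omega
    have hMn : M < n := by omega
    have e0 : {f : V → V // IsRF W A f} ≃
        {f : V → V // IsRF W A f ∧ ∀ v ∈ W \ A, f v ∈ A → v ∈ W \ A} :=
      Equiv.subtypeEquivRight (fun f => (and_iff_left (fun v hv _ => hv)).symm)
    rw [Nat.card_congr e0, card_decomp W A (W \ A) hA subset_rfl]
    set S := ∑ B ∈ (W \ A).powerset,
      A.card ^ B.card * Nat.card {f' : V → V // IsRF (W \ A) B f'} with hS
    have key : M * S = A.card * M * (A.card + M) ^ (M - 1) := by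
      rw [hS, Finset.mul_sum]
      have step : ∀ B ∈ (W \ A).powerset,
          M * (A.card ^ B.card * Nat.card {f' : V → V // IsRF (W \ A) B f'}) =
            A.card ^ B.card * (B.card * M ^ (M - B.card)) := by
        intro B hB
        have := ih M hMn (W \ A) B rfl (Finset.mem_powerset.mp hB)
        rw [← mul_assoc, mul_comm M (A.card ^ B.card), mul_assoc, this]
      rw [Finset.sum_congr rfl step]
      have := Finset.sum_powerset_apply_card
        (fun j => A.card ^ j * (j * M ^ (M - j))) (x := W \ A)
      rw [this, ← hM]
      simp only [smul_eq_mul]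
      exact binom_sum M A.card hM1
    have hsum : A.card + M = W.card := by omega
    rw [hsum] at key
    have hSval : S = A.card * W.card ^ (M - 1) := by
      have h2 : M * S = M * (A.card * W.card ^ (M - 1)) := by
        rw [key]; ring
      exact Nat.eq_of_mul_eq_mul_left (by omega) h2
    rw [hSval, ← hMcard]
    have hpow : W.card ^ M = W.card * W.card ^ (M - 1) := by
      conv_lhs => rw [show M = (M - 1) + 1 by omega]
      rw [pow_succ']
    rw [hpow]
    ring




namespace UprootedC

open SimpleGraph Finset

set_option linter.unusedSectionVars false

variable {V : Type*} [DecidableEq V]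

/-- `f` is a spanning in-tree (parent function) with root `r`. -/
def Good (r : V) (f : V → V) : Prop := f r = r ∧ ∀ v, ∃ k, f^[k] v = r

/-- The graph associated to a parent function. -/
def graphOf (r : V) (f : V → V) : SimpleGraph V :=
  SimpleGraph.fromRel (fun a b => a ≠ r ∧ f a = b)

lemma graphOf_adj {r : V} {f : V → V} {a b : V} :
    (graphOf r f).Adj a b ↔ a ≠ b ∧ ((a ≠ r ∧ f a = b) ∨ (b ≠ r ∧ f b = a)) := by
  simp [graphOf, fromRel_adj]

namespace Good

variable {r : V} {f : V → V} (hf : Good r f)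
include hf

lemma iterate_root (d : ℕ) : f^[d] r = r := by
  induction d with
  | zero => rfl
  | succ d ih => rw [Function.iterate_succ_apply', ih]; exact hf.1

lemma persist {v : V} {k : ℕ} (hk : f^[k] v = r) {l : ℕ} (hl : k ≤ l) : f^[l] v = r := by
  obtain ⟨d, rfl⟩ := Nat.exists_eq_add_of_le hl
  rw [add_comm, Function.iterate_add_apply, hk]
  exact hf.iterate_root d

lemma no_return {v : V} (hv : v ≠ r) (j : ℕ) : f^[j + 1] v ≠ v := by
  intro hcyc
  obtain ⟨k, hk⟩ := hf.2 v
  have hmul : ∀ m, f^[m * (j + 1)] v = v := by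
    intro m
    induction m with
    | zero => simp
    | succ m ih => rw [Nat.succ_mul, Function.iterate_add_apply, hcyc, ih]
  have : f^[k * (j + 1)] v = r := hf.persist hk (Nat.le_mul_of_pos_right k (by omega))
  exact hv (by rw [hmul k] at this; exact this)

lemma ne_self {v : V} (hv : v ≠ r) : f v ≠ v := by
  simpa using hf.no_return hv 0

lemma adj_parent {v : V} (hv : v ≠ r) : (graphOf r f).Adj v (f v) :=
  graphOf_adj.mpr ⟨Ne.symm (hf.ne_self hv), Or.inl ⟨hv, rfl⟩⟩

lemma reachable_root (v : V) : (graphOf r f).Reachable v r := by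
  obtain ⟨k, hk⟩ := hf.2 v
  induction k generalizing v with
  | zero => rw [show v = r from hk]
  | succ k ih =>
    by_cases h : v = r
    · rw [h]
    · exact ((hf.adj_parent h).reachable).trans
        (ih (f v) (by rw [← Function.iterate_succ_apply]; exact hk))

lemma connected [Nonempty V] : (graphOf r f).Connected :=
  Connected.mk (fun u v => (hf.reachable_root u).trans (hf.reachable_root v).symm)

omit hf

lemma reach_iff {G : SimpleGraph V} {P : V → Prop}
    (hP : ∀ u w, G.Adj u w → (P u ↔ P w)) {u w : V} (h : G.Reachable u w) :
    P u ↔ P w := by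
  obtain ⟨p⟩ := h
  induction p with
  | nil => exact Iff.rfl
  | cons h p ih => exact (hP _ _ h).trans ih

include hf

lemma oriented_claim {u w : V} (hur : u ≠ r) (hfu : f u = w)
    (hse : s(u, w) ≠ s(a, f a)) (ha : a ≠ r) :
    ((∃ j, f^[j] u = a) ↔ (∃ j, f^[j] w = a)) := by
  constructor
  · rintro ⟨j, hj⟩
    cases j with
    | zero =>
      exfalso
      apply hse
      have : u = a := hj
      subst this
      rw [hfu]
    | succ j =>
      refine ⟨j, ?_⟩
      rw [← hfu, ← Function.iterate_succ_apply]
      exact hj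
  · rintro ⟨j, hj⟩
    refine ⟨j + 1, ?_⟩
    rw [Function.iterate_succ_apply, hfu]
    exact hj

lemma bridge_oriented {a : V} (ha : a ≠ r) : (graphOf r f).IsBridge s(a, f a) := by
  rw [isBridge_iff]
  intro hreach
  have hPa : ∃ j, f^[j] a = a := ⟨0, rfl⟩
  have hPb : ¬ ∃ j, f^[j] (f a) = a := by
    rintro ⟨j, hj⟩
    exact hf.no_return ha j (by rw [Function.iterate_succ_apply]; exact hj)
  have hadj : ∀ u w, (graphOf r f \ fromEdgeSet {s(a, f a)}).Adj u w →
      ((∃ j, f^[j] u = a) ↔ (∃ j, f^[j] w = a)) := by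
    intro u w huw
    rw [sdiff_adj] at huw
    obtain ⟨hG, hne⟩ := huw
    rw [fromEdgeSet_adj] at hne
    have hse : s(u, w) ≠ s(a, f a) := by
      intro hcontra
      exact hne ⟨by simpa using hcontra, hG.ne⟩
    rcases (graphOf_adj.mp hG).2 with ⟨hur, hfu⟩ | ⟨hwr, hfw⟩
    · exact hf.oriented_claim hur hfu hse ha
    · exact (hf.oriented_claim hwr hfw (by rw [Sym2.eq_swap]; exact hse) ha).symm
  exact hPb ((reach_iff (G := graphOf r f \ fromEdgeSet {s(a, f a)}) hadj hreach).mp hPa)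

lemma isAcyclic : (graphOf r f).IsAcyclic := by
  rw [isAcyclic_iff_forall_adj_isBridge]
  intro u w huw
  rcases (graphOf_adj.mp huw).2 with ⟨hur, hfu⟩ | ⟨hwr, hfw⟩
  · subst hfu
    exact hf.bridge_oriented hur
  · subst hfw
    rw [Sym2.eq_swap]
    exact hf.bridge_oriented hwr

lemma isTree [Nonempty V] : (graphOf r f).IsTree := ⟨hf.connected, hf.isAcyclic⟩

end Good

lemma graphOf_injective {r : V} {f g : V → V} (hf : Good r f) (hg : Good r g)
    (h : graphOf r f = graphOf r g) : f = g := by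
  have key : ∀ (k : ℕ) (v : V), f^[k] v = r → f v = g v := by
    intro k
    induction k with
    | zero =>
      intro v hv
      have : v = r := hv
      subst this
      rw [hf.1, hg.1]
    | succ k ih =>
      intro v hv
      by_cases hvr : v = r
      · subst hvr
        rw [hf.1, hg.1]
      · have hadj : (graphOf r g).Adj v (f v) := h ▸ hf.adj_parent hvr
        rcases (graphOf_adj.mp hadj).2 with ⟨_, hgv⟩ | ⟨hfvr, hgfv⟩
        · exact hgv.symm
        · exfalso
          have hup : f (f v) = g (f v) :=
            ih (f v) (by rw [← Function.iterate_succ_apply]; exact hv)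
          apply hf.no_return hvr 1
          show f^[2] v = v
          rw [show (2:ℕ) = 1 + 1 from rfl, Function.iterate_add_apply]
          simpa [hup] using hgfv
  funext v
  obtain ⟨k, hk⟩ := hf.2 v
  exact key k v hk

section TreeToFun

variable {T : SimpleGraph V} (hT : T.IsTree) {r : V}

/-- The parent function of a tree rooted at `r`. -/
noncomputable def par (hT : T.IsTree) (r : V) : V → V := fun v =>
  if v = r then r else ((hT.existsUnique_path v r).choose.getVert 1)

lemma par_root : par hT r r = r := if_pos rfl

lemma par_eq_getVert {v : V} (hv : v ≠ r) {p : T.Walk v r} (hp : p.IsPath) :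
    par hT r v = p.getVert 1 := by
  rw [par, if_neg hv, (hT.existsUnique_path v r).choose_spec.2 p hp]

lemma par_adj {v : V} (hv : v ≠ r) : T.Adj v (par hT r v) := by
  obtain ⟨p, hp, -⟩ := hT.existsUnique_path v r
  have hlen : 0 < p.length := by
    rcases Nat.eq_zero_or_pos p.length with h | h
    · exact absurd (Walk.eq_of_length_eq_zero h) hv
    · exact h
  have h := p.adj_getVert_succ hlen
  rw [Walk.getVert_zero] at h
  rw [par_eq_getVert hT hv hp]
  exact h

lemma par_reach (v : V) : ∃ k, (par hT r)^[k] v = r := by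
  suffices H : ∀ (L : ℕ) (v : V) (p : T.Walk v r), p.IsPath → p.length ≤ L →
      ∃ k, (par hT r)^[k] v = r by
    obtain ⟨p, hp, -⟩ := hT.existsUnique_path v r
    exact H p.length v p hp le_rfl
  intro L
  induction L with
  | zero =>
    intro v p hp hlen
    exact ⟨0, Walk.eq_of_length_eq_zero (Nat.le_zero.mp hlen)⟩
  | succ L ih =>
    intro v p hp hlen
    by_cases hv : v = r
    · exact ⟨0, hv⟩
    · cases p with
      | nil => exact absurd rfl hv
      | cons h q =>
        rename_i x
        have hq : q.IsPath := ((Walk.cons_isPath_iff h q).mp hp).1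
        obtain ⟨k, hk⟩ := ih x q hq (by
          have := Walk.length_cons h q ▸ hlen
          omega)
        refine ⟨k + 1, ?_⟩
        rw [Function.iterate_succ_apply,
          show par hT r v = x by
            rw [par_eq_getVert hT hv hp, Walk.getVert_cons_succ, Walk.getVert_zero]]
        exact hk

lemma par_good : Good r (par hT r) := ⟨par_root hT, par_reach hT⟩

lemma graphOf_par : graphOf r (par hT r) = T := by
  ext a b
  rw [graphOf_adj]
  constructor
  · rintro ⟨hab, ⟨har, hpar⟩ | ⟨hbr, hpar⟩⟩
    · rw [← hpar]
      exact par_adj hT har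
    · rw [← hpar]
      exact (par_adj hT hbr).symm
  · intro hadj
    refine ⟨hadj.ne, ?_⟩
    by_cases har : a = r
    · right
      subst har
      refine ⟨hadj.ne', ?_⟩
      have hp : (Walk.cons hadj.symm Walk.nil : T.Walk b a).IsPath := by
        simp [Walk.cons_isPath_iff, hadj.ne']
      rw [par_eq_getVert hT hadj.ne' hp, Walk.getVert_cons_succ, Walk.getVert_zero]
    by_cases hbr : b = r
    · left
      subst hbr
      refine ⟨har, ?_⟩
      have hp : (Walk.cons hadj Walk.nil : T.Walk a b).IsPath := by
        simp [Walk.cons_isPath_iff, har]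
      rw [par_eq_getVert hT har hp, Walk.getVert_cons_succ, Walk.getVert_zero]
    · obtain ⟨q, hq, -⟩ := hT.existsUnique_path b r
      by_cases hmem : a ∈ q.support
      · right
        refine ⟨hbr, ?_⟩
        have htake : q.takeUntil a hmem = Walk.cons hadj.symm Walk.nil := by
          have h1 : (⟨q.takeUntil a hmem, hq.takeUntil hmem⟩ : T.Path b a) =
              Path.singleton hadj.symm := hT.2.path_unique _ _
          exact congrArg Subtype.val h1
        have hq_eq : q = Walk.cons hadj.symm (q.dropUntil a hmem) := by
          conv_lhs => rw [← q.take_spec hmem]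
          rw [htake, Walk.cons_append, Walk.nil_append]
        rw [par_eq_getVert hT hbr hq, hq_eq, Walk.getVert_cons_succ, Walk.getVert_zero]
      · left
        refine ⟨har, ?_⟩
        have hp : (Walk.cons hadj q).IsPath := (Walk.cons_isPath_iff hadj q).mpr ⟨hq, hmem⟩
        rw [par_eq_getVert hT har hp, Walk.getVert_cons_succ, Walk.getVert_zero]

end TreeToFun

end UprootedC

section PartD
open Finset UprootedC

variable {V : Type*} [DecidableEq V]

/-- Trees with constrained root-neighborhoods correspond to parent functions. -/
noncomputable def treeEquiv (r : V) (P : V → Prop) [Nonempty V] :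
    {T : SimpleGraph V // T.IsTree ∧ ∀ w, T.Adj r w → P w} ≃
    {f : V → V // Good r f ∧ ∀ w, w ≠ r → f w = r → P w} where
  toFun T := ⟨par T.2.1 r, par_good T.2.1, fun w hw hfw => T.2.2 w (by
      have h := par_adj T.2.1 (r := r) hw
      rw [hfw] at h
      exact h.symm)⟩
  invFun f := ⟨graphOf r f.1, f.2.1.isTree, fun w hadj => by
      rcases (graphOf_adj.mp hadj).2 with ⟨hrr, _⟩ | ⟨hwr, hfw⟩
      · exact absurd rfl hrr
      · exact f.2.2 w hwr hfw⟩
  left_inv T := Subtype.ext (graphOf_par T.2.1)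
  right_inv f := Subtype.ext (graphOf_injective (par_good f.2.1.isTree) f.2.1 (graphOf_par f.2.1.isTree))

lemma good_iff_isRF [Fintype V] {r : V} {S : Finset V} (f : V → V) :
    (Good r f ∧ ∀ w, w ≠ r → f w = r → w ∈ S) ↔
    (Uprooted.IsRF Finset.univ {r} f ∧
      ∀ v ∈ Finset.univ \ {r}, f v ∈ ({r} : Finset V) → v ∈ S) := by
  constructor
  · rintro ⟨⟨h1, h2⟩, h3⟩
    refine ⟨⟨fun v hv => absurd (mem_univ v) hv,
      fun a ha => by rw [mem_singleton.mp ha]; exact h1,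
      fun v _ => mem_univ _, fun v _ => ?_⟩, ?_⟩
    · obtain ⟨k, hk⟩ := h2 v
      exact ⟨k, by rw [hk]; exact mem_singleton_self r⟩
    · intro v hv hfv
      exact h3 v (by simpa using (mem_sdiff.mp hv).2) (mem_singleton.mp hfv)
  · rintro ⟨⟨h1, h2, h3, h4⟩, h5⟩
    refine ⟨⟨h2 r (mem_singleton_self r), fun v => ?_⟩, ?_⟩
    · obtain ⟨k, hk⟩ := h4 v (mem_univ v)
      exact ⟨k, mem_singleton.mp hk⟩
    · intro w hw hfw
      exact h5 w (mem_sdiff.mpr ⟨mem_univ w, by simpa using hw⟩)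
        (by rw [hfw]; exact mem_singleton_self r)

lemma binom_sum2 (s m : ℕ) (hs : 1 ≤ s) (hsm : s ≤ m) :
    ∑ j ∈ Finset.range (s + 1), s.choose j * (j * m ^ (m - j)) =
      s * (m ^ (m - s) * (m + 1) ^ (s - 1)) := by
  obtain ⟨s', rfl⟩ : ∃ s', s = s' + 1 := ⟨s - 1, by omega⟩
  rw [Finset.sum_range_succ']
  have h0 : (s' + 1).choose 0 * (0 * m ^ (m - 0)) = 0 := by simp
  rw [h0, add_zero]
  have hterm : ∀ i ∈ Finset.range (s' + 1),
      (s' + 1).choose (i + 1) * ((i + 1) * m ^ (m - (i + 1))) =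
        (s' + 1) * (m ^ (m - (s' + 1)) * (m ^ (s' - i) * s'.choose i)) := by
    intro i hi
    rw [Finset.mem_range] at hi
    have h := Nat.add_one_mul_choose_eq s' i
    have hexp : m - (i + 1) = (m - (s' + 1)) + (s' - i) := by omega
    calc (s' + 1).choose (i + 1) * ((i + 1) * m ^ (m - (i + 1)))
        = ((s' + 1).choose (i + 1) * (i + 1)) * m ^ (m - (i + 1)) := by ring
      _ = ((s' + 1) * s'.choose i) * m ^ (m - (i + 1)) := by rw [← h]
      _ = (s' + 1) * (m ^ (m - (s' + 1)) * (m ^ (s' - i) * s'.choose i)) := by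
          rw [hexp, pow_add]; ring
  rw [Finset.sum_congr rfl hterm, ← Finset.mul_sum, ← Finset.mul_sum,
    Nat.add_sub_cancel]
  congr 2
  have h1 := add_pow 1 m s'
  simp only [one_pow, one_mul] at h1
  rw [add_comm m 1]
  exact h1.symm

theorem main_count [Fintype V] (r : V) (S : Finset V) (hrS : r ∉ S)
    (hs1 : 1 ≤ S.card) (hs2 : S.card ≤ Fintype.card V - 2) :
    Nat.card {T : SimpleGraph V // T.IsTree ∧ ∀ w, T.Adj r w → w ∈ S} =
      S.card * (Fintype.card V ^ (S.card - 1) *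
        (Fintype.card V - 1) ^ (Fintype.card V - 2 - S.card)) := by
  classical
  have hV : 3 ≤ Fintype.card V := by omega
  haveI : Nonempty V := Fintype.card_pos_iff.mp (by omega)
  have hSsub : S ⊆ Finset.univ \ {r} := by
    intro v hv
    rw [mem_sdiff, mem_singleton]
    exact ⟨mem_univ v, fun h => hrS (h ▸ hv)⟩
  rw [Nat.card_congr (treeEquiv r (· ∈ S)),
    Nat.card_congr (Equiv.subtypeEquivRight (fun f => good_iff_isRF f)),
    card_decomp Finset.univ {r} S (subset_univ _) hSsub]
  set n := Fintype.card V with hndef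
  have hm : (Finset.univ \ {r} : Finset V).card = n - 1 := by
    rw [card_sdiff_of_subset (by simp)]
    simp [card_univ, hndef]
  set m := n - 1 with hmdef
  have step : ∀ B ∈ S.powerset,
      m * (({r} : Finset V).card ^ B.card *
        Nat.card {f' : V → V // Uprooted.IsRF (Finset.univ \ {r}) B f'}) =
      B.card * m ^ (m - B.card) := by
    intro B hB
    rw [card_singleton, one_pow, one_mul]
    have h := card_isRF (Finset.univ \ {r}) B ((mem_powerset.mp hB).trans hSsub)
    rw [hm] at h
    exact h
  set Ssum := ∑ B ∈ S.powerset, ({r} : Finset V).card ^ B.card *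
    Nat.card {f' : V → V // Uprooted.IsRF (Finset.univ \ {r}) B f'} with hSsum
  have hmain : m * Ssum = S.card * (m ^ (m - S.card) * (m + 1) ^ (S.card - 1)) := by
    rw [hSsum, Finset.mul_sum, Finset.sum_congr rfl step,
      Finset.sum_powerset_apply_card (fun j => j * m ^ (m - j)) (x := S)]
    simp only [smul_eq_mul]
    exact binom_sum2 S.card m hs1 (by omega)
  rw [show m + 1 = n by omega] at hmain
  apply Nat.eq_of_mul_eq_mul_left (show 0 < m by omega)
  rw [hmain]
  have hpow : m ^ (m - S.card) = m * m ^ (n - 2 - S.card) := by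
    rw [← pow_succ']
    congr 1
    omega
  rw [hpow]
  ring

end PartD

/-- The number of uprooted spanning trees of the complete graph `K_n` with root `n - k`
(vertex labelled `n - k`, i.e. index `n - k - 1` of `Fin n`) equals
`(n-1-k) * n^(n-2-k) * (n-1)^(k-1)`. -/
theorem uprooted_spanning_trees_Kn_root (n k : ℕ) (hn : 2 ≤ n)
    (hk1 : 1 ≤ k) (hk2 : k ≤ n - 2) :
    Nat.card {T : SimpleGraph (Fin n) // T ≤ ⊤ ∧ T.IsTree ∧
        ∀ w : Fin n, T.Adj ⟨n - k - 1, by omega⟩ w → w < ⟨n - k - 1, by omega⟩} =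
      (n - 1 - k) * n ^ (n - 2 - k) * (n - 1) ^ (k - 1) := by
  set r : Fin n := ⟨n - k - 1, by omega⟩ with hr
  have e1 : {T : SimpleGraph (Fin n) // T ≤ ⊤ ∧ T.IsTree ∧ ∀ w, T.Adj r w → w < r} ≃
      {T : SimpleGraph (Fin n) // T.IsTree ∧ ∀ w, T.Adj r w → w ∈ Finset.Iio r} :=
    Equiv.subtypeEquivRight (fun T => by
      constructor
      · rintro ⟨-, h1, h2⟩
        exact ⟨h1, fun w hw => Finset.mem_Iio.mpr (h2 w hw)⟩
      · rintro ⟨h1, h2⟩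
        exact ⟨le_top, h1, fun w hw => Finset.mem_Iio.mp (h2 w hw)⟩)
  have hcard : (Finset.Iio r).card = n - k - 1 := by
    rw [Fin.card_Iio]
  rw [Nat.card_congr e1,
    main_count r (Finset.Iio r) (by simp) (by rw [hcard]; omega)
      (by rw [hcard, Fintype.card_fin]; omega),
    hcard, Fintype.card_fin]
  rw [show (n - k - 1 : ℕ) - 1 = n - 2 - k by omega,
    show n - 2 - (n - k - 1) = k - 1 by omega,
    show (n : ℕ) - k - 1 = n - 1 - k by omega]
  ring
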